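/- For integers k ≥ 1, integer tuple μ with μ_i ≥ 2, positive integers r, p and any nonnegative integer tuple n, the identity ∑_{j ≤ n} (p + q·j) 𝒜_j(μ, a) 𝒜_{n-j}(μ, c) = ((p(a+c) + a·(q·n))/(a+c)) · 𝒜_n(μ, a+c) holds for complex a, c with a + c ≠ 0 and complex tuple q, where the sum is over tuples j with 0 ≤ j_i ≤ n_i. -/

import Mathlib

open Finset Polynomial


/-- Multiparameter Fuss–Catalan number `𝒜_t(μ, r)`:
`𝒜_0 = 1` and for `|t| > 0`, `𝒜_t(μ, r) = (r/(t_1!⋯t_k!)) ∏_{j=1}^{|t|-1}(t·μ + r - j)`. -/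
noncomputable def mfc {k : ℕ} (μ : Fin k → ℂ) (r : ℂ) (t : Fin k → ℕ) : ℂ :=
  if (∑ i, t i) = 0 then 1
  else r / (∏ i, ((t i).factorial : ℂ)) *
    ∏ j ∈ Finset.Icc 1 ((∑ i, t i) - 1), ((∑ i, (t i : ℂ) * μ i) + r - (j : ℂ))

namespace MohantyAux

variable {k : ℕ} (μ : Fin k → ℕ)

noncomputable def Md (t : Fin k → ℕ) : ℂ := ∑ i, (t i : ℂ) * (μ i : ℂ)

noncomputable def F (t : Fin k → ℕ) (r : ℂ) : ℂ :=
  (∏ j ∈ Finset.Icc 1 ((∑ i, t i) - 1), (Md μ t + r - (j : ℂ))) / ∏ i, ((t i).factorial : ℂ)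

noncomputable def A (t : Fin k → ℕ) (r : ℂ) : ℂ :=
  if (∑ i, t i) = 0 then 1 else r * F μ t r

lemma mfc_eq (r : ℂ) (t : Fin k → ℕ) : mfc (fun i => (μ i : ℂ)) r t = A μ t r := by
  unfold mfc A F Md
  split
  · rfl
  · ring

def eV (l : Fin k) : Fin k → ℕ := fun i => if i = l then 1 else 0

lemma eV_apply_self (l : Fin k) : eV l l = 1 := by simp [eV]

lemma eV_le {t : Fin k → ℕ} {l : Fin k} (hl : t l ≠ 0) (i : Fin k) : eV l i ≤ t i := by
  by_cases h : i = l <;> simp [eV, h] <;> omega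

lemma sum_sub_eV {t : Fin k → ℕ} {l : Fin k} (hl : t l ≠ 0) :
    ∑ i, (t - eV l) i = (∑ i, t i) - 1 := by
  have h : ∑ i, t i = (∑ i, (t - eV l) i) + 1 := by
    rw [show (1:ℕ) = ∑ i, eV l i by simp [eV], ← Finset.sum_add_distrib]
    refine Finset.sum_congr rfl fun i _ => ?_
    have := eV_le hl i
    simp only [Pi.sub_apply]
    omega
  omega

lemma Md_sub_eV {t : Fin k → ℕ} {l : Fin k} (hl : t l ≠ 0) :
    Md μ (t - eV l) = Md μ t - (μ l : ℂ) := by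
  unfold Md
  rw [show (μ l : ℂ) = ∑ i, (eV l i : ℂ) * (μ i : ℂ) by simp [eV], ← Finset.sum_sub_distrib]
  refine Finset.sum_congr rfl fun i _ => ?_
  have := eV_le hl i
  have : ((t i - eV l i : ℕ) : ℂ) = (t i : ℂ) - (eV l i : ℂ) := by
    push_cast [Nat.cast_sub this]; ring
  simp only [Pi.sub_apply]
  rw [this]; ring

lemma fact_prod_ne_zero (t : Fin k → ℕ) : (∏ i, ((t i).factorial : ℂ)) ≠ 0 := by
  refine Finset.prod_ne_zero_iff.2 fun i _ => ?_
  exact_mod_cast (Nat.factorial_pos (t i)).ne'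

lemma fact_prod_sub_eV {t : Fin k → ℕ} {l : Fin k} (hl : t l ≠ 0) :
    (∏ i, ((t i).factorial : ℂ)) = (t l : ℂ) * ∏ i, (((t - eV l) i).factorial : ℂ) := by
  rw [← Finset.mul_prod_erase univ _ (mem_univ l), ← Finset.mul_prod_erase univ
    (fun i => (((t - eV l) i).factorial : ℂ)) (mem_univ l), ← mul_assoc]
  congr 1
  · have h : (t - eV l) l = t l - 1 := by simp [eV]
    rw [h]
    rw [show ((t l).factorial : ℂ) = ((t l * (t l - 1).factorial : ℕ) : ℂ) by
      rw [Nat.mul_factorial_pred hl]]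
    push_cast; ring
  · refine Finset.prod_congr rfl fun i hi => ?_
    have : (t - eV l) i = t i := by
      simp only [Pi.sub_apply, eV]
      have : i ≠ l := (Finset.mem_erase.1 hi).1
      simp [this]
    rw [this]

lemma prod_shift (T : ℕ) (hT : 1 ≤ T) (x : ℂ) :
    ∏ j ∈ Finset.Icc 1 (T - 1), (x - 1 - (j : ℂ)) = ∏ j ∈ Finset.Icc 2 T, (x - (j : ℂ)) := by
  obtain ⟨m, rfl⟩ : ∃ m, T = m + 1 := ⟨T - 1, by omega⟩
  simp only [Nat.add_sub_cancel]
  rw [show (2:ℕ) = 1 + 1 from rfl, ← Finset.map_add_right_Icc, Finset.prod_map]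
  refine Finset.prod_congr rfl fun j _ => ?_
  simp [addRightEmbedding]
  push_cast; ring

lemma prod_split_bot (T : ℕ) (hT : 2 ≤ T) (x : ℂ) :
    ∏ j ∈ Finset.Icc 1 (T - 1), (x - (j : ℂ)) = (x - 1) * ∏ j ∈ Finset.Icc 2 (T - 1), (x - (j : ℂ)) := by
  rw [show Finset.Icc 1 (T-1) = insert 1 (Finset.Icc 2 (T-1)) by ext z; simp; omega,
    Finset.prod_insert (by simp)]
  norm_num

lemma prod_split_top (T : ℕ) (hT : 2 ≤ T) (x : ℂ) :
    ∏ j ∈ Finset.Icc 2 T, (x - (j : ℂ)) = (x - (T : ℂ)) * ∏ j ∈ Finset.Icc 2 (T - 1), (x - (j : ℂ)) := by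
  rw [show Finset.Icc 2 T = insert T (Finset.Icc 2 (T-1)) by ext z; simp; omega,
    Finset.prod_insert (by simp; omega)]

-- F evaluations when T ≥ 2
lemma F_eval_big {t : Fin k → ℕ} (hT : 2 ≤ ∑ i, t i) (r : ℂ) :
    F μ t r = (Md μ t + r - 1) * (∏ j ∈ Finset.Icc 2 ((∑ i, t i) - 1), (Md μ t + r - (j : ℂ)))
      / ∏ i, ((t i).factorial : ℂ) := by
  unfold F
  rw [prod_split_bot _ hT]

lemma F_eval_pred {t : Fin k → ℕ} (hT : 2 ≤ ∑ i, t i) (r : ℂ) :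
    F μ t (r - 1) = (Md μ t + r - ((∑ i, t i : ℕ) : ℂ)) *
      (∏ j ∈ Finset.Icc 2 ((∑ i, t i) - 1), (Md μ t + r - (j : ℂ))) / ∏ i, ((t i).factorial : ℂ) := by
  unfold F
  rw [show ∏ j ∈ Finset.Icc 1 ((∑ i, t i) - 1), (Md μ t + (r - 1) - (j : ℂ))
      = ∏ j ∈ Finset.Icc 1 ((∑ i, t i) - 1), ((Md μ t + r) - 1 - (j : ℂ)) by
    refine Finset.prod_congr rfl fun j _ => by ring]
  rw [prod_shift _ (by omega), prod_split_top _ hT]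

lemma F_eval_sub {t : Fin k → ℕ} {l : Fin k} (hl : t l ≠ 0) (hT : 2 ≤ ∑ i, t i) (r : ℂ) :
    F μ (t - eV l) (r + (μ l : ℂ) - 1) = (t l : ℂ) *
      (∏ j ∈ Finset.Icc 2 ((∑ i, t i) - 1), (Md μ t + r - (j : ℂ))) / ∏ i, ((t i).factorial : ℂ) := by
  unfold F
  rw [sum_sub_eV hl]
  rw [show ∏ j ∈ Finset.Icc 1 ((∑ i, t i) - 1 - 1), (Md μ (t - eV l) + (r + (μ l : ℂ) - 1) - (j : ℂ))
      = ∏ j ∈ Finset.Icc 1 ((∑ i, t i) - 1 - 1), ((Md μ t + r) - 1 - (j : ℂ)) by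
    refine Finset.prod_congr rfl fun j _ => ?_
    rw [Md_sub_eV μ hl]; ring]
  rw [prod_shift _ (by omega)]
  rw [fact_prod_sub_eV hl, mul_div_mul_left _ _ (Nat.cast_ne_zero.2 hl)]

lemma t_le_one {t : Fin k → ℕ} (h1 : ∑ i, t i = 1) (i : Fin k) : t i ≤ 1 := by
  have := Finset.single_le_sum (f := t) (fun i _ => Nat.zero_le _) (mem_univ i)
  omega

lemma F_eval_one {t : Fin k → ℕ} (h1 : ∑ i, t i = 1) (r : ℂ) : F μ t r = 1 := by
  unfold F
  rw [h1]
  simp only [Nat.sub_self, Finset.Icc_eq_empty_of_lt (by norm_num : (1:ℕ) > 0), Finset.prod_empty]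
  rw [show (∏ i, ((t i).factorial : ℂ)) = 1 by
    refine Finset.prod_eq_one fun i _ => ?_
    rw [Nat.factorial_eq_one.2 (t_le_one h1 i)]; norm_num]
  norm_num

lemma sub_eV_eq_zero {t : Fin k → ℕ} {l : Fin k} (h1 : ∑ i, t i = 1) (hl : t l ≠ 0) (i : Fin k) :
    (t - eV l) i = 0 := by
  have hs : ∑ i, (t - eV l) i = 0 := by rw [sum_sub_eV hl, h1]
  exact Finset.sum_eq_zero_iff.1 hs i (mem_univ i)

lemma recA (t : Fin k → ℕ) (r : ℂ) :
    A μ t r = A μ t (r - 1) + ∑ l, (if t l = 0 then 0 else A μ (t - eV l) (r + (μ l : ℂ) - 1)) := by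
  by_cases h0 : ∑ i, t i = 0
  · have : ∀ l, t l = 0 := fun l => Finset.sum_eq_zero_iff.1 h0 l (mem_univ l)
    simp [A, h0, this]
  by_cases h1 : ∑ i, t i = 1
  · have hA : ∀ l, (if t l = 0 then (0:ℂ) else A μ (t - eV l) (r + (μ l : ℂ) - 1)) = (t l : ℂ) := by
      intro l
      by_cases hl : t l = 0
      · simp [hl]
      · rw [if_neg hl]
        have hz : ∑ i, (t - eV l) i = 0 :=
          Finset.sum_eq_zero fun i _ => sub_eV_eq_zero h1 hl i
        have ht1 : t l = 1 := by have := t_le_one h1 l; omega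
        have hone : A μ (t - eV l) (r + (μ l : ℂ) - 1) = 1 := by
          unfold A; rw [if_pos hz]
        rw [hone, ht1]; norm_num
    rw [Finset.sum_congr rfl fun l _ => hA l]
    simp only [A, if_neg h0, F_eval_one μ h1]
    rw [show ∑ l, (t l : ℂ) = ((∑ l, t l : ℕ) : ℂ) by push_cast; rfl, h1]
    push_cast; ring
  · have hT : 2 ≤ ∑ i, t i := by omega
    have hne : ∑ i, t i ≠ 0 := by omega
    have hbr : ∀ l, (if t l = 0 then (0:ℂ) else A μ (t - eV l) (r + (μ l : ℂ) - 1))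
        = (t l : ℂ) * (r + (μ l : ℂ) - 1) *
          ((∏ j ∈ Finset.Icc 2 ((∑ i, t i) - 1), (Md μ t + r - (j : ℂ))) / ∏ i, ((t i).factorial : ℂ)) := by
      intro l
      by_cases hl : t l = 0
      · simp [hl]
      · rw [if_neg hl]
        have hs : ∑ i, (t - eV l) i ≠ 0 := by rw [sum_sub_eV hl]; omega
        have : A μ (t - eV l) (r + (μ l : ℂ) - 1)
            = (r + (μ l : ℂ) - 1) * F μ (t - eV l) (r + (μ l : ℂ) - 1) := by
          unfold A; rw [if_neg hs]
        rw [this, F_eval_sub μ hl hT]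
        ring
    rw [Finset.sum_congr rfl fun l _ => hbr l]
    have hsum : ∑ l, (t l : ℂ) * (r + (μ l : ℂ) - 1)
        = ((∑ i, t i : ℕ) : ℂ) * r + Md μ t - ((∑ i, t i : ℕ) : ℂ) := by
      have h : ∀ l, (t l : ℂ) * (r + (μ l : ℂ) - 1)
          = (t l : ℂ) * r + (t l : ℂ) * (μ l : ℂ) - (t l : ℂ) := fun l => by ring
      simp_rw [h]
      rw [Finset.sum_sub_distrib, Finset.sum_add_distrib, ← Finset.sum_mul]
      unfold Md
      push_cast
      ring
    rw [show ∑ l, (t l : ℂ) * (r + (μ l : ℂ) - 1) *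
          ((∏ j ∈ Finset.Icc 2 ((∑ i, t i) - 1), (Md μ t + r - (j : ℂ))) / ∏ i, ((t i).factorial : ℂ))
        = (((∑ i, t i : ℕ) : ℂ) * r + Md μ t - ((∑ i, t i : ℕ) : ℂ)) *
          ((∏ j ∈ Finset.Icc 2 ((∑ i, t i) - 1), (Md μ t + r - (j : ℂ))) / ∏ i, ((t i).factorial : ℂ)) by
      rw [← Finset.sum_mul, hsum]]
    simp only [A, if_neg hne]
    rw [F_eval_big μ hT, F_eval_pred μ hT]
    have hD := fact_prod_ne_zero (k := k) t
    field_simp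
    ring

lemma recF (t : Fin k → ℕ) (i : Fin k) (r : ℂ) :
    (t i : ℂ) * F μ t r = (t i : ℂ) * F μ t (r - 1)
      + ∑ l, (if t l = 0 then 0 else ((t - eV l) i : ℂ) * F μ (t - eV l) (r + (μ l : ℂ) - 1)) := by
  by_cases h0 : ∑ i, t i = 0
  · have : ∀ l, t l = 0 := fun l => Finset.sum_eq_zero_iff.1 h0 l (mem_univ l)
    simp [this]
  by_cases h1 : ∑ i, t i = 1
  · have hA : ∀ l, (if t l = 0 then (0:ℂ)
        else ((t - eV l) i : ℂ) * F μ (t - eV l) (r + (μ l : ℂ) - 1)) = 0 := by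
      intro l
      by_cases hl : t l = 0
      · simp [hl]
      · rw [if_neg hl, sub_eV_eq_zero h1 hl i]
        norm_num
    simp only [hA, F_eval_one μ h1, Finset.sum_const_zero, add_zero]
  · have hT : 2 ≤ ∑ i, t i := by omega
    have hbr : ∀ l, (if t l = 0 then (0:ℂ)
        else ((t - eV l) i : ℂ) * F μ (t - eV l) (r + (μ l : ℂ) - 1))
        = ((t i : ℂ) - (eV l i : ℂ)) * (t l : ℂ) *
          ((∏ j ∈ Finset.Icc 2 ((∑ i, t i) - 1), (Md μ t + r - (j : ℂ))) / ∏ i, ((t i).factorial : ℂ)) := by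
      intro l
      by_cases hl : t l = 0
      · simp [hl]
      · rw [if_neg hl, F_eval_sub μ hl hT]
        have h2 : ((t - eV l) i : ℂ) = (t i : ℂ) - (eV l i : ℂ) := by
          have hle : eV l i ≤ t i := by
            by_cases h : i = l <;> simp [eV, h] <;> omega
          simp only [Pi.sub_apply]
          push_cast [Nat.cast_sub hle]
          ring
        rw [h2]
        ring
    rw [Finset.sum_congr rfl fun l _ => hbr l]
    have hsum : ∑ l, ((t i : ℂ) - (eV l i : ℂ)) * (t l : ℂ)
        = (t i : ℂ) * ((∑ i, t i : ℕ) : ℂ) - (t i : ℂ) := by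
      have h : ∀ l, ((t i : ℂ) - (eV l i : ℂ)) * (t l : ℂ)
          = (t i : ℂ) * (t l : ℂ) - (eV l i : ℂ) * (t l : ℂ) := fun l => by ring
      simp_rw [h]
      rw [Finset.sum_sub_distrib, ← Finset.mul_sum]
      congr 1
      · push_cast; rfl
      · simp [eV]
    rw [show ∑ l, ((t i : ℂ) - (eV l i : ℂ)) * (t l : ℂ) *
          ((∏ j ∈ Finset.Icc 2 ((∑ i, t i) - 1), (Md μ t + r - (j : ℂ))) / ∏ i, ((t i).factorial : ℂ))
        = ((t i : ℂ) * ((∑ i, t i : ℕ) : ℂ) - (t i : ℂ)) *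
          ((∏ j ∈ Finset.Icc 2 ((∑ i, t i) - 1), (Md μ t + r - (j : ℂ))) / ∏ i, ((t i).factorial : ℂ)) by
      rw [← Finset.sum_mul, hsum]]
    rw [F_eval_big μ hT, F_eval_pred μ hT]
    have hD := fact_prod_ne_zero (k := k) t
    field_simp
    ring

lemma sub_sub_eV {n j : Fin k → ℕ} {l : Fin k} (hj : j ≤ n - eV l) (hl : n l ≠ 0) :
    n - j - eV l = (n - eV l) - j := by
  funext i
  have h1 := (Pi.le_def.1 hj) i
  simp only [Pi.sub_apply] at h1 ⊢
  by_cases h : i = l <;> simp [eV, h] at h1 ⊢ <;> omega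

lemma sum_rec (w : (Fin k → ℕ) → ℂ) (n : Fin k → ℕ) (a c : ℂ) :
    ∑ j ∈ Finset.Iic n, w j * A μ j a * A μ (n - j) c
      = ∑ j ∈ Finset.Iic n, w j * A μ j a * A μ (n - j) (c - 1)
        + ∑ l, (if n l = 0 then 0
            else ∑ j ∈ Finset.Iic (n - eV l), w j * A μ j a * A μ ((n - eV l) - j) (c + (μ l : ℂ) - 1)) := by
  have step1 : ∑ j ∈ Finset.Iic n, w j * A μ j a * A μ (n - j) c
      = ∑ j ∈ Finset.Iic n, w j * A μ j a * A μ (n - j) (c - 1)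
        + ∑ j ∈ Finset.Iic n, ∑ l, (w j * A μ j a *
            (if (n - j) l = 0 then 0 else A μ ((n - j) - eV l) (c + (μ l : ℂ) - 1))) := by
    rw [← Finset.sum_add_distrib]
    refine Finset.sum_congr rfl fun j _ => ?_
    rw [recA μ (n - j) c, mul_add, Finset.mul_sum]
  rw [step1, Finset.sum_comm]
  congr 1
  refine Finset.sum_congr rfl fun l _ => ?_
  by_cases hl : n l = 0
  · rw [if_pos hl]
    refine Finset.sum_eq_zero fun j hj => ?_
    have h : (n - j) l = 0 := by
      simp only [Pi.sub_apply]; omega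
    simp [h]
  · rw [if_neg hl]
    have hsub : Finset.Iic (n - eV l) ⊆ Finset.Iic n :=
      Finset.Iic_subset_Iic.2 (by intro i; simp only [Pi.sub_apply]; omega)
    have hz : ∀ x ∈ Finset.Iic n, x ∉ Finset.Iic (n - eV l) →
        w x * A μ x a * (if (n - x) l = 0 then 0 else A μ ((n - x) - eV l) (c + (μ l : ℂ) - 1)) = 0 := by
      intro x hx hnx
      rw [Finset.mem_Iic] at hx hnx
      have hxl : (n - x) l = 0 := by
        rw [Pi.le_def] at hx
        have h2 : ¬ ∀ i, x i ≤ (n - eV l) i := fun h => hnx (Pi.le_def.2 h)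
        push_neg at h2
        obtain ⟨i, hi⟩ := h2
        have hxi := hx i
        have hil : i = l := by
          by_contra hne
          simp [eV, hne] at hi
          omega
        subst hil
        simp only [Pi.sub_apply] at hi ⊢
        simp [eV] at hi
        omega
      simp [hxl]
    rw [← Finset.sum_subset hsub hz]
    refine Finset.sum_congr rfl fun j hj => ?_
    rw [Finset.mem_Iic] at hj
    have hjl : j l ≤ n l - 1 := by
      have := (Pi.le_def.1 hj) l
      simp only [Pi.sub_apply] at this
      simpa [eV] using this
    have hnz : (n - j) l ≠ 0 := by
      simp only [Pi.sub_apply]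
      omega
    rw [if_neg hnz, sub_sub_eV hj hl]

lemma sum_pos_of_ne {n j : Fin k → ℕ} (hj : j ≤ n) (hne : j ≠ n) : ∑ i, (n - j) i ≠ 0 := by
  have h2 : ¬ ∀ i, n i ≤ j i := by
    intro h
    exact hne (le_antisymm hj (Pi.le_def.2 h))
  push_neg at h2
  obtain ⟨i, hi⟩ := h2
  intro hz
  have := Finset.sum_eq_zero_iff.1 hz i (mem_univ i)
  simp only [Pi.sub_apply] at this
  omega

lemma A_zero_right (t : Fin k → ℕ) (ht : ∑ i, t i ≠ 0) : A μ t 0 = 0 := by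
  unfold A
  rw [if_neg ht, zero_mul]

lemma base_zero (w : (Fin k → ℕ) → ℂ) (n : Fin k → ℕ) (a : ℂ) :
    ∑ j ∈ Finset.Iic n, w j * A μ j a * A μ (n - j) ((0:ℕ):ℂ) = w n * A μ n a := by
  rw [Finset.sum_eq_single n]
  · have h : n - n = (0 : Fin k → ℕ) := by funext i; simp
    have h2 : A μ (0 : Fin k → ℕ) ((0:ℕ):ℂ) = 1 := by unfold A; simp
    rw [h, h2, mul_one]
  · intro j hj hne
    rw [Finset.mem_Iic] at hj
    rw [show ((0:ℕ):ℂ) = 0 by norm_num, A_zero_right μ _ (sum_pos_of_ne hj hne), mul_zero]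
  · intro h
    exact absurd (Finset.mem_Iic.2 (le_refl n)) h

lemma conv1 : ∀ N : ℕ, ∀ n : Fin k → ℕ, ∑ i, n i = N → ∀ a : ℂ, ∀ m : ℕ,
    ∑ j ∈ Finset.Iic n, A μ j a * A μ (n - j) ((m:ℕ):ℂ) = A μ n (a + (m:ℂ)) := by
  intro N
  induction N using Nat.strong_induction_on with
  | _ N ih =>
    intro n hn a m
    induction m with
    | zero =>
      have := base_zero μ (fun _ => 1) n a
      simp only [one_mul] at this
      rw [this]
      norm_num
    | succ m ihm =>
      have hrec := sum_rec μ (fun _ => 1) n a (((m+1:ℕ)):ℂ)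
      simp only [one_mul] at hrec
      have h1 : (((m+1:ℕ)):ℂ) - 1 = ((m:ℕ):ℂ) := by push_cast; ring
      have h2 : ∀ l : Fin k, (((m+1:ℕ)):ℂ) + ((μ l : ℕ):ℂ) - 1 = (((m + μ l :ℕ)):ℂ) := by
        intro l; push_cast; ring
      rw [h1] at hrec
      simp only [h2] at hrec
      rw [hrec, ihm]
      have hbr : ∀ l, (if n l = 0 then (0:ℂ)
          else ∑ j ∈ Finset.Iic (n - eV l), A μ j a * A μ ((n - eV l) - j) (((m + μ l : ℕ)):ℂ))
          = (if n l = 0 then (0:ℂ) else A μ (n - eV l) (a + ((m + μ l : ℕ):ℂ))) := by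
        intro l
        by_cases hl : n l = 0
        · simp [hl]
        · rw [if_neg hl, if_neg hl]
          have hlt : ∑ i, (n - eV l) i < N := by
            rw [sum_sub_eV hl, hn]
            have : n l ≤ ∑ i, n i := Finset.single_le_sum (f := n) (fun i _ => Nat.zero_le _) (mem_univ l)
            omega
          exact ih _ hlt (n - eV l) rfl a (m + μ l)
      rw [Finset.sum_congr rfl fun l _ => hbr l]
      have hAn := recA μ n (a + ((m+1:ℕ):ℂ))
      have h3 : a + ((m+1:ℕ):ℂ) - 1 = a + ((m:ℕ):ℂ) := by push_cast; ring
      have h4 : ∀ l : Fin k, a + ((m+1:ℕ):ℂ) + ((μ l : ℕ):ℂ) - 1 = a + ((m + μ l : ℕ):ℂ) := by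
        intro l; push_cast; ring
      rw [h3] at hAn
      simp only [h4] at hAn
      rw [hAn]

lemma conv2 (i : Fin k) : ∀ N : ℕ, ∀ n : Fin k → ℕ, ∑ i, n i = N → ∀ a : ℂ, ∀ m : ℕ,
    ∑ j ∈ Finset.Iic n, (j i : ℂ) * A μ j a * A μ (n - j) ((m:ℕ):ℂ)
      = a * (n i : ℂ) * F μ n (a + (m:ℂ)) := by
  intro N
  induction N using Nat.strong_induction_on with
  | _ N ih =>
    intro n hn a m
    induction m with
    | zero =>
      rw [base_zero μ (fun j => (j i : ℂ)) n a]
      by_cases h0 : ∑ i', n i' = 0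
      · have : n i = 0 := Finset.sum_eq_zero_iff.1 h0 i (mem_univ i)
        rw [this]
        simp [A, h0]
      · have : A μ n a = a * F μ n a := by unfold A; rw [if_neg h0]
        rw [this]
        norm_num
        ring
    | succ m ihm =>
      have hrec := sum_rec μ (fun j => (j i : ℂ)) n a (((m+1:ℕ)):ℂ)
      have h1 : (((m+1:ℕ)):ℂ) - 1 = ((m:ℕ):ℂ) := by push_cast; ring
      have h2 : ∀ l : Fin k, (((m+1:ℕ)):ℂ) + ((μ l : ℕ):ℂ) - 1 = (((m + μ l :ℕ)):ℂ) := by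
        intro l; push_cast; ring
      rw [h1] at hrec
      simp only [h2] at hrec
      rw [hrec, ihm]
      have hbr : ∀ l, (if n l = 0 then (0:ℂ)
          else ∑ j ∈ Finset.Iic (n - eV l), (j i : ℂ) * A μ j a * A μ ((n - eV l) - j) (((m + μ l : ℕ)):ℂ))
          = (if n l = 0 then (0:ℂ) else a * (((n - eV l) i : ℕ):ℂ) * F μ (n - eV l) (a + ((m + μ l : ℕ):ℂ))) := by
        intro l
        by_cases hl : n l = 0
        · simp [hl]
        · rw [if_neg hl, if_neg hl]
          have hlt : ∑ i', (n - eV l) i' < N := by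
            rw [sum_sub_eV hl, hn]
            have : n l ≤ ∑ i', n i' := Finset.single_le_sum (f := n) (fun i' _ => Nat.zero_le _) (mem_univ l)
            omega
          exact ih _ hlt (n - eV l) rfl a (m + μ l)
      rw [Finset.sum_congr rfl fun l _ => hbr l]
      have hFn := recF μ n i (a + ((m+1:ℕ):ℂ))
      have h3 : a + ((m+1:ℕ):ℂ) - 1 = a + ((m:ℕ):ℂ) := by push_cast; ring
      have h4 : ∀ l : Fin k, a + ((m+1:ℕ):ℂ) + ((μ l : ℕ):ℂ) - 1 = a + ((m + μ l : ℕ):ℂ) := by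
        intro l; push_cast; ring
      rw [h3] at hFn
      simp only [h4] at hFn
      calc a * (n i : ℂ) * F μ n (a + ((m:ℕ):ℂ))
          + ∑ l, (if n l = 0 then (0:ℂ)
              else a * (((n - eV l) i : ℕ):ℂ) * F μ (n - eV l) (a + ((m + μ l : ℕ):ℂ)))
          = a * ((n i : ℂ) * F μ n (a + ((m:ℕ):ℂ))
            + ∑ l, (if n l = 0 then (0:ℂ)
              else (((n - eV l) i : ℕ):ℂ) * F μ (n - eV l) (a + ((m + μ l : ℕ):ℂ)))) := by
            rw [mul_add, Finset.mul_sum]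
            congr 1
            · ring
            · refine Finset.sum_congr rfl fun l _ => ?_
              by_cases hl : n l = 0 <;> simp [hl] <;> ring
        _ = a * ((n i : ℂ) * F μ n (a + ((m+1:ℕ):ℂ))) := by rw [← hFn]
        _ = a * (n i : ℂ) * F μ n (a + ((m+1:ℕ):ℂ)) := by ring

noncomputable def pF (t : Fin k → ℕ) : Polynomial ℂ :=
  Polynomial.C ((∏ i, ((t i).factorial : ℂ))⁻¹) *
    ∏ j ∈ Finset.Icc 1 ((∑ i, t i) - 1), (Polynomial.C (Md μ t - (j : ℂ)) + Polynomial.X)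

noncomputable def pA (t : Fin k → ℕ) : Polynomial ℂ :=
  if (∑ i, t i) = 0 then 1 else Polynomial.X * pF μ t

lemma pF_eval (t : Fin k → ℕ) (x : ℂ) : (pF μ t).eval x = F μ t x := by
  unfold pF F
  rw [eval_mul, eval_C, eval_prod, div_eq_mul_inv, mul_comm]
  congr 1
  refine Finset.prod_congr rfl fun j _ => ?_
  rw [eval_add, eval_C, eval_X]
  ring

lemma pA_eval (t : Fin k → ℕ) (x : ℂ) : (pA μ t).eval x = A μ t x := by
  unfold pA A
  by_cases h : ∑ i, t i = 0
  · rw [if_pos h, if_pos h]; simp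
  · rw [if_neg h, if_neg h, eval_mul, eval_X, pF_eval]

lemma conv1C (n : Fin k → ℕ) (a c : ℂ) :
    ∑ j ∈ Finset.Iic n, A μ j a * A μ (n - j) c = A μ n (a + c) := by
  have key : (∑ j ∈ Finset.Iic n, Polynomial.C (A μ j a) * pA μ (n - j))
      = (pA μ n).comp (Polynomial.C a + Polynomial.X) := by
    refine Polynomial.eq_of_infinite_eval_eq _ _
      ((Set.infinite_range_of_injective (f := (Nat.cast : ℕ → ℂ)) Nat.cast_injective).mono ?_)
    rintro x ⟨m, rfl⟩
    simp only [Set.mem_setOf_eq, eval_finset_sum, eval_mul, eval_C, pA_eval, eval_comp,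
      eval_add, eval_X]
    exact conv1 μ (∑ i, n i) n rfl a m
  have h := congrArg (Polynomial.eval c) key
  simpa only [eval_finset_sum, eval_mul, eval_C, pA_eval, eval_comp, eval_add, eval_X] using h

lemma conv2C (i : Fin k) (n : Fin k → ℕ) (a c : ℂ) :
    ∑ j ∈ Finset.Iic n, (j i : ℂ) * A μ j a * A μ (n - j) c
      = a * (n i : ℂ) * F μ n (a + c) := by
  have key : (∑ j ∈ Finset.Iic n, Polynomial.C ((j i : ℂ) * A μ j a) * pA μ (n - j))
      = Polynomial.C (a * (n i : ℂ)) * (pF μ n).comp (Polynomial.C a + Polynomial.X) := by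
    refine Polynomial.eq_of_infinite_eval_eq _ _
      ((Set.infinite_range_of_injective (f := (Nat.cast : ℕ → ℂ)) Nat.cast_injective).mono ?_)
    rintro x ⟨m, rfl⟩
    simp only [Set.mem_setOf_eq, eval_finset_sum, eval_mul, eval_C, pA_eval, pF_eval, eval_comp,
      eval_add, eval_X]
    have := conv2 μ i (∑ i, n i) n rfl a m
    simp only [mul_assoc] at this ⊢
    exact this
  have h := congrArg (Polynomial.eval c) key
  have h2 := h
  simp only [eval_finset_sum, eval_mul, eval_C, pA_eval, pF_eval, eval_comp, eval_add, eval_X] at h2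
  simp only [mul_assoc] at h2 ⊢
  exact h2

end MohantyAux

open MohantyAux in
/-- Mohanty's generalized convolution identity:
`∑_{j ≤ n} (p + q·j) 𝒜_j(μ, a) 𝒜_{n-j}(μ, c)
  = ((p(a+c) + a(q·n))/(a+c)) 𝒜_n(μ, a+c)`. -/
theorem mohanty_convolution {k : ℕ} (hk : 1 ≤ k) (μ : Fin k → ℕ)
    (hμ : ∀ i, 2 ≤ μ i) (r p : ℕ) (hr : 0 < r) (hp : 0 < p)
    (n : Fin k → ℕ) (a c : ℂ) (hac : a + c ≠ 0) (q : Fin k → ℂ) :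
    ∑ j ∈ Finset.Iic n,
        ((p : ℂ) + ∑ i, q i * (j i : ℂ)) *
          mfc (fun i => (μ i : ℂ)) a j * mfc (fun i => (μ i : ℂ)) c (n - j) =
      (((p : ℂ) * (a + c) + a * ∑ i, q i * (n i : ℂ)) / (a + c)) *
        mfc (fun i => (μ i : ℂ)) (a + c) n := by
  simp only [mfc_eq]
  have expand : ∀ j, ((p:ℂ) + ∑ i, q i * (j i : ℂ)) * A μ j a * A μ (n - j) c
      = (p:ℂ) * (A μ j a * A μ (n - j) c)
        + ∑ i, q i * ((j i : ℂ) * A μ j a * A μ (n - j) c) := by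
    intro j
    rw [add_mul, add_mul, Finset.sum_mul, Finset.sum_mul, mul_assoc]
    congr 1
    refine Finset.sum_congr rfl fun i' _ => by ring
  rw [Finset.sum_congr rfl fun j _ => expand j, Finset.sum_add_distrib, ← Finset.mul_sum,
    Finset.sum_comm, conv1C μ n a c]
  have h2 : ∀ i', ∑ j ∈ Finset.Iic n, q i' * ((j i' : ℂ) * A μ j a * A μ (n - j) c)
      = q i' * (a * (n i' : ℂ) * F μ n (a + c)) := by
    intro i'
    rw [← Finset.mul_sum, conv2C μ i' n a c]
  rw [Finset.sum_congr rfl fun i' _ => h2 i']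
  by_cases h0 : ∑ i, n i = 0
  · have hn0 : ∀ i, n i = 0 := fun i => Finset.sum_eq_zero_iff.1 h0 i (Finset.mem_univ i)
    have hA1 : A μ n (a + c) = 1 := by unfold A; rw [if_pos h0]
    rw [hA1]
    simp only [hn0, Nat.cast_zero, mul_zero, zero_mul, Finset.sum_const_zero, add_zero, mul_one]
    field_simp
  · have hA : A μ n (a + c) = (a + c) * F μ n (a + c) := by unfold A; rw [if_neg h0]
    rw [hA]
    have h3 : ∑ i', q i' * (a * (n i' : ℂ) * F μ n (a + c))
        = (∑ i', q i' * (n i' : ℂ)) * (a * F μ n (a + c)) := by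
      rw [Finset.sum_mul]
      refine Finset.sum_congr rfl fun i' _ => by ring
    rw [h3]
    field_simp
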